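/- For a connected weighted graph G with Laplacian L, volume V_G = sum of all degrees, and Moore–Penrose pseudoinverse L^+, the commute time satisfies c(i,j) = V_G * (e_i - e_j)^T L^+ (e_i - e_j), where e_i is the i-th standard basis vector. -/

import Mathlib

open Matrix BigOperators

/-- Probability that the random walk with transition probabilities `p`,
started at `i`, reaches `j` for the first time in exactly `t` steps. -/
noncomputable def hitProb {n : ℕ} (p : Fin n → Fin n → ℝ) : ℕ → Fin n → Fin n → ℝ
  | 0, i, j => if i = j then 1 else 0
  | t + 1, i, j => if i = j then 0 else ∑ l, p i l * hitProb p t l j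

/-- Expected first-hitting time of `j` from `i`. -/
noncomputable def hittingTime {n : ℕ} (p : Fin n → Fin n → ℝ) (i j : Fin n) : ℝ :=
  ∑' t : ℕ, (t : ℝ) * hitProb p t i j

namespace CTaux

/-- Survival probability: probability the walk started at `i` has not yet hit `j`
after `t` steps (with `surv p j t j = 0`). -/
noncomputable def surv {n : ℕ} (p : Fin n → Fin n → ℝ) (j : Fin n) : ℕ → Fin n → ℝ
  | 0 => fun i => if i = j then 0 else 1
  | (t+1) => fun i => if i = j then 0 else ∑ l, p i l * surv p j t l

variable {n : ℕ} {p : Fin n → Fin n → ℝ}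

lemma surv_self (j : Fin n) (t : ℕ) : surv p j t j = 0 := by
  cases t <;> simp [surv]

lemma surv_nonneg (hpnn : ∀ i l, 0 ≤ p i l) (j : Fin n) :
    ∀ (t : ℕ) (i : Fin n), 0 ≤ surv p j t i := by
  intro t
  induction t with
  | zero => intro i; simp only [surv]; split <;> norm_num
  | succ t ih =>
    intro i; simp only [surv]; split
    · exact le_refl 0
    · exact Finset.sum_nonneg fun l _ => mul_nonneg (hpnn i l) (ih l)


lemma surv_le_one (hpnn : ∀ i l, 0 ≤ p i l) (hprow : ∀ i, ∑ l, p i l = 1) (j : Fin n) :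
    ∀ (t : ℕ) (i : Fin n), surv p j t i ≤ 1 := by
  intro t
  induction t with
  | zero => intro i; simp only [surv]; split <;> norm_num
  | succ t ih =>
    intro i; simp only [surv]; split
    · norm_num
    · calc ∑ l, p i l * surv p j t l ≤ ∑ l, p i l * 1 :=
            Finset.sum_le_sum fun l _ => mul_le_mul_of_nonneg_left (ih l) (hpnn i l)
        _ = 1 := by simp [hprow i]

lemma surv_succ_le (hpnn : ∀ i l, 0 ≤ p i l) (hprow : ∀ i, ∑ l, p i l = 1) (j : Fin n) :
    ∀ (t : ℕ) (i : Fin n), surv p j (t+1) i ≤ surv p j t i := by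
  intro t
  induction t with
  | zero =>
    intro i
    simp only [surv]; split
    · exact le_refl 0
    · calc ∑ l, p i l * surv p j 0 l ≤ ∑ l, p i l * 1 :=
            Finset.sum_le_sum fun l _ => mul_le_mul_of_nonneg_left
              (surv_le_one hpnn hprow j 0 l) (hpnn i l)
        _ = 1 := by simp [hprow i]
  | succ t ih =>
    intro i
    show surv p j (t+2) i ≤ surv p j (t+1) i
    simp only [surv]; split
    · exact le_refl 0
    · exact Finset.sum_le_sum fun l _ => mul_le_mul_of_nonneg_left (ih l) (hpnn i l)

lemma surv_antitone (hpnn : ∀ i l, 0 ≤ p i l) (hprow : ∀ i, ∑ l, p i l = 1) (j : Fin n)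
    (i : Fin n) : Antitone (fun t => surv p j t i) :=
  antitone_nat_of_succ_le fun t => surv_succ_le hpnn hprow j t i

/-- Submultiplicative bound on survival across time blocks. -/
lemma surv_add_le (hpnn : ∀ i l, 0 ≤ p i l) (j : Fin n) {t : ℕ} {C : ℝ} (hC : 0 ≤ C)
    (h : ∀ l, surv p j t l ≤ C) :
    ∀ (s : ℕ) (i : Fin n), surv p j (s + t) i ≤ surv p j s i * C := by
  intro s
  induction s with
  | zero =>
    intro i
    by_cases hij : i = j
    · subst hij; simp [surv_self]
    · simpa [surv, hij] using h i
  | succ s ih =>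
    intro i
    rw [show s + 1 + t = s + t + 1 from by omega]
    show surv p j (s + t + 1) i ≤ surv p j (s+1) i * C
    simp only [surv]; split
    · simp
    · rw [Finset.sum_mul]
      exact Finset.sum_le_sum fun l _ => by
        rw [mul_assoc]
        exact mul_le_mul_of_nonneg_left (ih l) (hpnn i l)

/-- Connectivity gives, for each node, a time at which survival is `< 1`. -/
lemma exists_surv_lt_one (hpnn : ∀ i l, 0 ≤ p i l) (hprow : ∀ i, ∑ l, p i l = 1)
    (j : Fin n) (i : Fin n)
    (hconn : Relation.ReflTransGen (fun a b => 0 < p a b) i j) :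
    ∃ k, surv p j k i < 1 := by
  induction hconn using Relation.ReflTransGen.head_induction_on with
  | refl => exact ⟨0, by simp [surv_self]⟩
  | head hab _ ih =>
    rename_i a b hbc
    obtain ⟨k, hk⟩ := ih
    by_cases haj : a = j
    · exact ⟨0, by simp [haj, surv_self]⟩
    refine ⟨k + 1, ?_⟩
    have key : ∑ l, p a l * surv p j k l
        ≤ ∑ l, p a l * (if l = b then surv p j k b else 1) := by
      refine Finset.sum_le_sum fun l _ => mul_le_mul_of_nonneg_left ?_ (hpnn a l)
      by_cases hlb : l = b
      · simp [hlb]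
      · simp [hlb, surv_le_one hpnn hprow j k l]
    have key2 : ∑ l, p a l * (if l = b then surv p j k b else 1)
        = 1 - p a b * (1 - surv p j k b) := by
      have : ∀ l, p a l * (if l = b then surv p j k b else 1)
          = p a l - (if l = b then p a b * (1 - surv p j k b) else 0) := by
        intro l; by_cases hlb : l = b <;> simp [hlb] <;> ring
      rw [Finset.sum_congr rfl fun l _ => this l, Finset.sum_sub_distrib, hprow a,
        Finset.sum_ite_eq' Finset.univ b]
      simp
    have hlt : 1 - p a b * (1 - surv p j k b) < 1 := by
      have := mul_pos hab (by linarith : (0:ℝ) < 1 - surv p j k b)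
      linarith
    calc surv p j (k+1) a = ∑ l, p a l * surv p j k l := by simp [surv, haj]
      _ ≤ _ := key
      _ < 1 := by rw [key2]; exact hlt


/-- A uniform time `N ≥ 1` and rate `θ < 1` bounding survival at all start nodes. -/
lemma exists_uniform_bound (hpnn : ∀ i l, 0 ≤ p i l) (hprow : ∀ i, ∑ l, p i l = 1)
    (j : Fin n)
    (hconn : ∀ i, Relation.ReflTransGen (fun a b => 0 < p a b) i j) :
    ∃ (N : ℕ) (θ : ℝ), 1 ≤ N ∧ 0 ≤ θ ∧ θ < 1 ∧ ∀ i, surv p j N i ≤ θ := by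
  have hne : (Finset.univ : Finset (Fin n)).Nonempty := ⟨j, Finset.mem_univ j⟩
  choose k hk using fun i => exists_surv_lt_one hpnn hprow j i (hconn i)
  set N : ℕ := 1 + Finset.univ.sup k with hN
  have hkN : ∀ i, k i ≤ N := fun i =>
    le_trans (Finset.le_sup (Finset.mem_univ i)) (Nat.le_add_left _ 1)
  refine ⟨N, Finset.univ.sup' hne (fun i => surv p j N i), Nat.le_add_right 1 _, ?_, ?_, ?_⟩
  · calc (0:ℝ) = surv p j N j := (surv_self j N).symm
      _ ≤ _ := Finset.le_sup' _ (Finset.mem_univ j)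
  · rw [Finset.sup'_lt_iff]
    intro i _
    exact lt_of_le_of_lt (surv_antitone hpnn hprow j i (hkN i)) (hk i)
  · intro i
    exact Finset.le_sup' _ (Finset.mem_univ i)

lemma surv_le_geom (hpnn : ∀ i l, 0 ≤ p i l) (hprow : ∀ i, ∑ l, p i l = 1)
    (j : Fin n) {N : ℕ} {θ : ℝ} (hN : 1 ≤ N) (hθ0 : 0 ≤ θ)
    (hθ : ∀ i, surv p j N i ≤ θ) :
    ∀ (t : ℕ) (i : Fin n), surv p j t i ≤ θ ^ (t / N) := by
  intro t
  induction t using Nat.strong_induction_on with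
  | _ t ih =>
    intro i
    by_cases ht : t < N
    · rw [Nat.div_eq_of_lt ht]
      simpa using surv_le_one hpnn hprow j t i
    · push_neg at ht
      have h1 : t = (t - N) + N := by omega
      have h2 : t / N = (t - N) / N + 1 := by
        rw [Nat.div_eq_sub_div (by omega) ht]
      calc surv p j t i = surv p j ((t - N) + N) i := by rw [← h1]
        _ ≤ surv p j (t - N) i * θ := surv_add_le hpnn j hθ0 hθ (t - N) i
        _ ≤ θ ^ ((t - N) / N) * θ := by
            exact mul_le_mul_of_nonneg_right (ih (t - N) (by omega) i) hθ0
        _ = θ ^ (t / N) := by rw [h2, pow_succ]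

lemma sum_geom_div {N : ℕ} (hN : 1 ≤ N) (θ : ℝ) (hθ0 : 0 ≤ θ) (hθ1 : θ < 1) (m : ℕ) :
    ∑ t ∈ Finset.range m, θ ^ (t / N) ≤ (N : ℝ) * (1 - θ)⁻¹ := by
  have key : ∀ K, ∑ t ∈ Finset.range (N * K), θ ^ (t / N)
      = (N : ℝ) * ∑ k ∈ Finset.range K, θ ^ k := by
    intro K
    induction K with
    | zero => simp
    | succ K ihK =>
      rw [Nat.mul_succ, Finset.range_eq_Ico,
        ← Finset.sum_Ico_consecutive (fun t => θ ^ (t / N)) (Nat.zero_le (N*K))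
          (Nat.le_add_right (N*K) N),
        ← Finset.range_eq_Ico, ihK, Finset.sum_range_succ]
      have hc : ∀ t ∈ Finset.Ico (N*K) (N*K + N), θ ^ (t / N) = θ ^ K := by
        intro t htm
        rw [Finset.mem_Ico] at htm
        congr 1
        exact Nat.div_eq_of_lt_le (by rw [mul_comm]; exact htm.1)
          (by rw [Nat.succ_mul, mul_comm]; exact htm.2)
      rw [Finset.sum_congr rfl hc, Finset.sum_const, Nat.card_Ico,
        Nat.add_sub_cancel_left, nsmul_eq_mul]
      ring
  calc ∑ t ∈ Finset.range m, θ ^ (t / N)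
      ≤ ∑ t ∈ Finset.range (N * m), θ ^ (t / N) := by
        apply Finset.sum_le_sum_of_subset_of_nonneg
        · exact Finset.range_subset_range.2 (Nat.le_mul_of_pos_left m hN)
        · intro t _ _; positivity
    _ = (N : ℝ) * ∑ k ∈ Finset.range m, θ ^ k := key m
    _ ≤ (N : ℝ) * (1 - θ)⁻¹ := by
        refine mul_le_mul_of_nonneg_left ?_ (Nat.cast_nonneg N)
        rw [← tsum_geometric_of_lt_one hθ0 hθ1]
        exact Summable.sum_le_tsum (Finset.range m) (fun k _ => pow_nonneg hθ0 k)
          (summable_geometric_of_lt_one hθ0 hθ1)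


lemma summable_surv (hpnn : ∀ i l, 0 ≤ p i l) (hprow : ∀ i, ∑ l, p i l = 1)
    (j : Fin n) (hconn : ∀ i, Relation.ReflTransGen (fun a b => 0 < p a b) i j)
    (i : Fin n) : Summable (fun t => surv p j t i) := by
  obtain ⟨N, θ, hN, hθ0, hθ1, hθ⟩ := exists_uniform_bound hpnn hprow j hconn
  apply summable_of_sum_range_le (fun t => surv_nonneg hpnn j t i)
  intro m
  calc ∑ t ∈ Finset.range m, surv p j t i ≤ ∑ t ∈ Finset.range m, θ ^ (t / N) :=
        Finset.sum_le_sum fun t _ => surv_le_geom hpnn hprow j hN hθ0 hθ t i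
    _ ≤ (N : ℝ) * (1 - θ)⁻¹ := sum_geom_div hN θ hθ0 hθ1 m

lemma tendsto_mul_surv (hpnn : ∀ i l, 0 ≤ p i l) (hprow : ∀ i, ∑ l, p i l = 1)
    (j : Fin n) (hconn : ∀ i, Relation.ReflTransGen (fun a b => 0 < p a b) i j)
    (i : Fin n) :
    Filter.Tendsto (fun m : ℕ => ((m : ℝ) + 1) * surv p j m i) Filter.atTop (nhds 0) := by
  obtain ⟨N, θ, hN, hθ0, hθ1, hθ⟩ := exists_uniform_bound hpnn hprow j hconn
  have hgeom : Filter.Tendsto (fun k : ℕ => ((N:ℝ) * ((k:ℝ) * θ ^ k) + ((N:ℝ)+1) * θ ^ k))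
      Filter.atTop (nhds 0) := by
    have h1 : Filter.Tendsto (fun k : ℕ => (k:ℝ) * θ ^ k) Filter.atTop (nhds 0) := by
      have := (summable_pow_mul_geometric_of_norm_lt_one 1
        (by rwa [Real.norm_eq_abs, abs_of_nonneg hθ0] : ‖θ‖ < 1)).tendsto_atTop_zero
      simpa using this
    have h2 : Filter.Tendsto (fun k : ℕ => θ ^ k) Filter.atTop (nhds 0) :=
      tendsto_pow_atTop_nhds_zero_of_lt_one hθ0 hθ1
    have := ((h1.const_mul (N:ℝ)).add (h2.const_mul ((N:ℝ)+1)))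
    simpa using this
  have hdiv : Filter.Tendsto (fun m : ℕ => m / N) Filter.atTop Filter.atTop := by
    apply Filter.tendsto_atTop_atTop.2
    intro b
    exact ⟨b * N, fun t ht => (Nat.le_div_iff_mul_le (by omega)).2 ht⟩
  have hbound : ∀ m : ℕ, ((m : ℝ) + 1) * surv p j m i
      ≤ (N:ℝ) * (((m / N : ℕ):ℝ) * θ ^ (m / N)) + ((N:ℝ)+1) * θ ^ (m / N) := by
    intro m
    have hb : surv p j m i ≤ θ ^ (m / N) := surv_le_geom hpnn hprow j hN hθ0 hθ m i
    have hm : ((m:ℝ) + 1) ≤ (N:ℝ) * ((m / N : ℕ):ℝ) + ((N:ℝ) + 1) := by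
      have h1 : m < N * (m / N) + N := by
        have h2 := Nat.div_add_mod m N
        have h3 : m % N < N := Nat.mod_lt m (by omega)
        omega
      have : (m:ℝ) < (N:ℝ) * ((m / N : ℕ):ℝ) + (N:ℝ) := by exact_mod_cast h1
      linarith
    calc ((m:ℝ) + 1) * surv p j m i ≤ ((m:ℝ) + 1) * θ ^ (m / N) :=
          mul_le_mul_of_nonneg_left hb (by positivity)
      _ ≤ ((N:ℝ) * ((m / N : ℕ):ℝ) + ((N:ℝ) + 1)) * θ ^ (m / N) :=
          mul_le_mul_of_nonneg_right hm (pow_nonneg hθ0 _)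
      _ = (N:ℝ) * (((m / N : ℕ):ℝ) * θ ^ (m / N)) + ((N:ℝ)+1) * θ ^ (m / N) := by ring
  exact squeeze_zero (fun m => mul_nonneg (by positivity) (surv_nonneg hpnn j m i))
    hbound (hgeom.comp hdiv)


lemma hitProb_nonneg (hpnn : ∀ i l, 0 ≤ p i l) :
    ∀ (t : ℕ) (i j : Fin n), 0 ≤ hitProb p t i j := by
  intro t
  induction t with
  | zero => intro i j; simp only [hitProb]; split <;> norm_num
  | succ t ih =>
    intro i j; simp only [hitProb]; split
    · exact le_refl 0
    · exact Finset.sum_nonneg fun l _ => mul_nonneg (hpnn i l) (ih l j)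

lemma hitProb_self (j : Fin n) (t : ℕ) : hitProb p (t+1) j j = 0 := by
  simp [hitProb]

lemma surv_eq_one_sub (hprow : ∀ i, ∑ l, p i l = 1) (j : Fin n) :
    ∀ (t : ℕ) (i : Fin n),
      surv p j t i = 1 - ∑ s ∈ Finset.range (t+1), hitProb p s i j := by
  intro t
  induction t with
  | zero =>
    intro i
    by_cases hij : i = j <;> simp [surv, hitProb, hij]
  | succ t ih =>
    intro i
    by_cases hij : i = j
    · subst hij
      have : ∑ s ∈ Finset.range (t+2), hitProb p s i i = 1 := by
        rw [Finset.sum_range_succ']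
        have : ∀ s ∈ Finset.range (t+1), hitProb p (s+1) i i = 0 :=
          fun s _ => hitProb_self i s
        rw [Finset.sum_congr rfl this]
        simp [hitProb]
      rw [surv_self, this]
      ring
    · have lhs : surv p j (t+1) i = ∑ l, p i l * surv p j t l := by simp [surv, hij]
      have h0 : hitProb p 0 i j = 0 := by simp [hitProb, hij]
      have step : ∀ s, ∑ l, p i l * hitProb p s l j = hitProb p (s+1) i j := by
        intro s; simp [hitProb, hij]
      calc surv p j (t+1) i = ∑ l, p i l * surv p j t l := lhs
        _ = ∑ l, p i l * (1 - ∑ s ∈ Finset.range (t+1), hitProb p s l j) :=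
            Finset.sum_congr rfl fun l _ => by rw [ih l]
        _ = (∑ l, p i l) - ∑ l, ∑ s ∈ Finset.range (t+1), p i l * hitProb p s l j := by
            rw [← Finset.sum_sub_distrib]
            exact Finset.sum_congr rfl fun l _ => by rw [mul_sub, mul_one, Finset.mul_sum]
        _ = 1 - ∑ s ∈ Finset.range (t+1), ∑ l, p i l * hitProb p s l j := by
            rw [hprow i, Finset.sum_comm]
        _ = 1 - ∑ s ∈ Finset.range (t+1), hitProb p (s+1) i j := by
            rw [Finset.sum_congr rfl fun s _ => step s]
        _ = 1 - ∑ s ∈ Finset.range (t+1+1), hitProb p s i j := by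
            rw [Finset.sum_range_succ' (fun s => hitProb p s i j) (t+1), h0, add_zero]

lemma hitProb_succ_eq (hprow : ∀ i, ∑ l, p i l = 1) (j : Fin n) (t : ℕ) (i : Fin n) :
    hitProb p (t+1) i j = surv p j t i - surv p j (t+1) i := by
  rw [surv_eq_one_sub hprow, surv_eq_one_sub hprow, Finset.sum_range_succ (n := t+1)]
  ring

/-- Key finite identity relating expected-hitting-time partial sums to
survival partial sums. -/
lemma partial_sum_identity (hprow : ∀ i, ∑ l, p i l = 1) (j i : Fin n) :
    ∀ m : ℕ, ∑ t ∈ Finset.range (m+1), (t:ℝ) * hitProb p t i j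
      = ∑ t ∈ Finset.range (m+1), surv p j t i - ((m:ℝ)+1) * surv p j m i := by
  intro m
  induction m with
  | zero => simp
  | succ m ihm =>
    rw [Finset.sum_range_succ (f := fun t : ℕ => (t:ℝ) * hitProb p t i j) (n := m+1), ihm,
      Finset.sum_range_succ (f := fun t => surv p j t i) (n := m+1),
      hitProb_succ_eq hprow]
    push_cast
    ring

lemma hittingTime_eq_tsum_surv (hpnn : ∀ i l, 0 ≤ p i l) (hprow : ∀ i, ∑ l, p i l = 1)
    (j : Fin n) (hconn : ∀ i, Relation.ReflTransGen (fun a b => 0 < p a b) i j)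
    (i : Fin n) : hittingTime p i j = ∑' t, surv p j t i := by
  have hsum := summable_surv hpnn hprow j hconn i
  have hG : Filter.Tendsto (fun m => ∑ t ∈ Finset.range m, surv p j t i)
      Filter.atTop (nhds (∑' t, surv p j t i)) := hsum.hasSum.tendsto_sum_nat
  have hF : Filter.Tendsto (fun m => ∑ t ∈ Finset.range m, (t:ℝ) * hitProb p t i j)
      Filter.atTop (nhds (∑' t, surv p j t i)) := by
    rw [← Filter.tendsto_add_atTop_iff_nat 1]
    have := (hG.comp (Filter.tendsto_add_atTop_nat 1)).sub
      (tendsto_mul_surv hpnn hprow j hconn i)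
    simp only [sub_zero] at this
    apply this.congr
    intro m
    exact (partial_sum_identity hprow j i m).symm
  have hHasSum : HasSum (fun t : ℕ => (t:ℝ) * hitProb p t i j) (∑' t, surv p j t i) :=
    (hasSum_iff_tendsto_nat_of_nonneg
      (fun t => mul_nonneg (Nat.cast_nonneg t) (hitProb_nonneg hpnn t i j)) _).2 hF
  exact hHasSum.tsum_eq


lemma tsum_surv_self (j : Fin n) : ∑' t, surv p j t j = 0 := by
  simp [surv_self]

lemma tsum_surv_recurrence (hpnn : ∀ i l, 0 ≤ p i l) (hprow : ∀ i, ∑ l, p i l = 1)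
    (j : Fin n) (hconn : ∀ i, Relation.ReflTransGen (fun a b => 0 < p a b) i j)
    (i : Fin n) (hij : i ≠ j) :
    ∑' t, surv p j t i = 1 + ∑ l, p i l * ∑' t, surv p j t l := by
  rw [Summable.tsum_eq_zero_add (summable_surv hpnn hprow j hconn i)]
  have h0 : surv p j 0 i = 1 := by simp [surv, hij]
  have h1 : ∀ t : ℕ, surv p j (t+1) i = ∑ l, p i l * surv p j t l := fun t => by
    simp [surv, hij]
  rw [h0]
  congr 1
  rw [tsum_congr h1, Summable.tsum_finsetSum (fun l _ => (summable_surv hpnn hprow j hconn l).mul_left (p i l))]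
  exact Finset.sum_congr rfl fun l _ => tsum_mul_left

end CTaux

section LinAlg

variable {n : ℕ} {w : Fin n → Fin n → ℝ} {d : Fin n → ℝ} {L : Matrix (Fin n) (Fin n) ℝ}

lemma mulVec_laplacian (hL : L = Matrix.diagonal d - Matrix.of w) (x : Fin n → ℝ)
    (k : Fin n) : (L *ᵥ x) k = d k * x k - ∑ l, w k l * x l := by
  subst hL
  rw [Matrix.sub_mulVec, Pi.sub_apply, Matrix.mulVec_diagonal]
  rfl

lemma sum_mulVec_laplacian (hsymm : ∀ i j, w i j = w j i) (hd : ∀ i, d i = ∑ j, w i j)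
    (hL : L = Matrix.diagonal d - Matrix.of w) (x : Fin n → ℝ) :
    ∑ k, (L *ᵥ x) k = 0 := by
  have hcol : ∀ l, ∑ k, w k l = d l := by
    intro l
    rw [hd l]
    exact Finset.sum_congr rfl fun k _ => hsymm k l
  calc ∑ k, (L *ᵥ x) k = ∑ k, (d k * x k - ∑ l, w k l * x l) :=
        Finset.sum_congr rfl fun k _ => mulVec_laplacian hL x k
    _ = ∑ k, d k * x k - ∑ l, (∑ k, w k l) * x l := by
        rw [Finset.sum_sub_distrib, Finset.sum_comm]
        congr 1
        exact Finset.sum_congr rfl fun l _ => by rw [Finset.sum_mul]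
    _ = ∑ k, d k * x k - ∑ l, d l * x l := by
        congr 1
        exact Finset.sum_congr rfl fun l _ => by rw [hcol l]
    _ = 0 := sub_self _

lemma laplacian_kernel_const (hsymm : ∀ i j, w i j = w j i) (hnonneg : ∀ i j, 0 ≤ w i j)
    (hd : ∀ i, d i = ∑ j, w i j) (hL : L = Matrix.diagonal d - Matrix.of w)
    (x : Fin n → ℝ) (hx : L *ᵥ x = 0) {a b : Fin n}
    (hab : Relation.ReflTransGen (fun a b => 0 < w a b) a b) : x a = x b := by
  have hcol : ∀ l, ∑ k, w k l = d l := by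
    intro l
    rw [hd l]
    exact Finset.sum_congr rfl fun k _ => hsymm k l
  have hquad : ∑ k, ∑ l, w k l * (x k - x l)^2 = 0 := by
    have h1 : ∑ k, x k * (L *ᵥ x) k = 0 := by
      rw [hx]; simp
    have h2 : ∑ k, x k * (d k * x k - ∑ l, w k l * x l) = 0 := by
      rw [← h1]
      exact Finset.sum_congr rfl fun k _ => by rw [mulVec_laplacian hL]
    have key : ∀ k, ∑ l, w k l * (x k - x l)^2
        = 2 * (x k * (d k * x k - ∑ l, w k l * x l))
          + ∑ l, (w k l * x l * x l - w k l * x k * x k) := by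
      intro k
      have h1' : ∀ l, w k l * (x k - x l)^2
          = 2 * (x k * (w k l * x k - w k l * x l))
            + (w k l * x l * x l - w k l * x k * x k) := fun l => by ring
      rw [Finset.sum_congr rfl fun l _ => h1' l, Finset.sum_add_distrib,
        ← Finset.mul_sum, ← Finset.mul_sum, Finset.sum_sub_distrib,
        ← Finset.sum_mul, hd k]
    have hzero : ∑ k, ∑ l, (w k l * x l * x l - w k l * x k * x k) = 0 := by
      have hswap : ∑ k, ∑ l, w k l * x l * x l = ∑ k, ∑ l, w k l * x k * x k := by
        rw [Finset.sum_comm]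
        refine Finset.sum_congr rfl fun l _ => Finset.sum_congr rfl fun k _ => by
          rw [hsymm k l]
      simp only [Finset.sum_sub_distrib]
      rw [hswap, sub_self]
    rw [Finset.sum_congr rfl fun k _ => key k, Finset.sum_add_distrib, hzero, add_zero,
      ← Finset.mul_sum, h2, mul_zero]
  have hterm : ∀ k l, 0 < w k l → x k = x l := by
    intro k l hkl
    have hnn : ∀ k ∈ Finset.univ, (0:ℝ) ≤ ∑ l, w k l * (x k - x l)^2 :=
      fun k _ => Finset.sum_nonneg fun l _ => mul_nonneg (hnonneg k l) (sq_nonneg _)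
    have hz := (Finset.sum_eq_zero_iff_of_nonneg hnn).1 hquad k (Finset.mem_univ k)
    have hnn2 : ∀ l ∈ Finset.univ, (0:ℝ) ≤ w k l * (x k - x l)^2 :=
      fun l _ => mul_nonneg (hnonneg k l) (sq_nonneg _)
    have hz2 := (Finset.sum_eq_zero_iff_of_nonneg hnn2).1 hz l (Finset.mem_univ l)
    have : (x k - x l)^2 = 0 := by
      rcases mul_eq_zero.1 hz2 with h | h
      · exact absurd h (ne_of_gt hkl)
      · exact h
    have := pow_eq_zero_iff (n := 2) (by norm_num) |>.1 this
    linarith [this]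
  induction hab with
  | refl => rfl
  | tail _ hbc ih => exact ih.trans (hterm _ _ hbc)

end LinAlg

/-- For a connected weighted graph with Laplacian `L = D - A`, volume
`V_G = ∑ d i` and Moore–Penrose pseudoinverse `L⁺`, the commute time satisfies
`c i j = V_G * (e_i - e_j)ᵀ L⁺ (e_i - e_j)`. -/
theorem commute_time_pseudoinverse_formula {n : ℕ} (w : Fin n → Fin n → ℝ)
    (hsymm : ∀ i j, w i j = w j i) (hnonneg : ∀ i j, 0 ≤ w i j)
    (hconn : ∀ i j : Fin n, Relation.ReflTransGen (fun a b => 0 < w a b) i j)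
    (d : Fin n → ℝ) (hd : ∀ i, d i = ∑ j, w i j) (hdpos : ∀ i, 0 < d i)
    (p : Fin n → Fin n → ℝ) (hp : ∀ i l, p i l = w i l / d i)
    (c : Fin n → Fin n → ℝ)
    (hc : ∀ i j, c i j = hittingTime p i j + hittingTime p j i)
    (L : Matrix (Fin n) (Fin n) ℝ) (hL : L = Matrix.diagonal d - Matrix.of w)
    (VG : ℝ) (hVG : VG = ∑ i, d i)
    (Lp : Matrix (Fin n) (Fin n) ℝ)
    (hmp1 : L * Lp * L = L) (hmp2 : Lp * L * Lp = Lp)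
    (hmp3 : (L * Lp)ᵀ = L * Lp) (hmp4 : (Lp * L)ᵀ = Lp * L) :
    ∀ i j, c i j =
      VG * ((Pi.single i 1 - Pi.single j 1) ⬝ᵥ
        (Lp *ᵥ (Pi.single i 1 - Pi.single j 1))) := by
  intro i j
  classical
  have hpnn : ∀ a b, 0 ≤ p a b := fun a b => by
    rw [hp]; exact div_nonneg (hnonneg a b) (hdpos a).le
  have hprow : ∀ a, ∑ b, p a b = 1 := by
    intro a
    rw [Finset.sum_congr rfl fun b _ => hp a b, ← Finset.sum_div, ← hd a,
      div_self (hdpos a).ne']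
  have hpconn : ∀ a b, Relation.ReflTransGen (fun x y => 0 < p x y) a b := fun a b =>
    Relation.ReflTransGen.mono (r := fun x y => 0 < w x y) (p := fun x y => 0 < p x y)
      (fun x y hxy => by simp only [hp]; exact div_pos hxy (hdpos x)) a b (hconn a b)
  set f : Fin n → Fin n → ℝ := fun j' k => ∑' t, CTaux.surv p j' t k with hfdef
  have hself : ∀ j', f j' j' = 0 := fun j' => CTaux.tsum_surv_self j'
  have hht : ∀ a b, hittingTime p a b = f b a := fun a b =>
    CTaux.hittingTime_eq_tsum_surv hpnn hprow b (fun i' => hpconn i' b) a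
  -- the Laplacian applied to a hitting-time vector
  have hLf : ∀ j', L *ᵥ f j' = fun k => d k - VG * (if k = j' then 1 else 0) := by
    intro j'
    have hoff : ∀ k, k ≠ j' → (L *ᵥ f j') k = d k := by
      intro k hk
      rw [mulVec_laplacian hL]
      have hrec : f j' k = 1 + ∑ l, p k l * f j' l :=
        CTaux.tsum_surv_recurrence hpnn hprow j' (fun i' => hpconn i' j') k hk
      have hstep : d k * f j' k = d k + ∑ l, w k l * f j' l := by
        rw [hrec, mul_add, mul_one, Finset.mul_sum]
        congr 1
        refine Finset.sum_congr rfl fun l _ => ?_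
        rw [hp k l, ← mul_assoc, mul_div_assoc', mul_div_cancel_left₀ _ (hdpos k).ne']
      rw [hstep]; ring
    funext k
    by_cases hk : k = j'
    · subst hk
      have hsum := sum_mulVec_laplacian hsymm hd hL (f k)
      have hsplit : (L *ᵥ f k) k + ∑ l ∈ Finset.univ.erase k, (L *ᵥ f k) l = 0 := by
        rw [Finset.add_sum_erase _ _ (Finset.mem_univ k)]; exact hsum
      have herase : ∑ l ∈ Finset.univ.erase k, (L *ᵥ f k) l
          = ∑ l ∈ Finset.univ.erase k, d l :=
        Finset.sum_congr rfl fun l hl => hoff l (Finset.ne_of_mem_erase hl)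
      have hdsum : d k + ∑ l ∈ Finset.univ.erase k, d l = VG := by
        rw [Finset.add_sum_erase _ _ (Finset.mem_univ k)]; exact hVG.symm
      rw [herase] at hsplit
      rw [if_pos rfl, mul_one]
      linarith
    · simp only [if_neg hk, mul_zero, sub_zero]
      exact hoff k hk
  -- the pseudoinverse recovers hitting-time differences
  have hfix : ∀ (j' a b : Fin n), f j' a - f j' b
      = (Lp *ᵥ (L *ᵥ f j')) a - (Lp *ᵥ (L *ᵥ f j')) b := by
    intro j' a b
    have hg : L *ᵥ (f j' - Lp *ᵥ (L *ᵥ f j')) = 0 := by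
      rw [Matrix.mulVec_sub, Matrix.mulVec_mulVec, Matrix.mulVec_mulVec, hmp1, sub_self]
    have hcst := laplacian_kernel_const hsymm hnonneg hd hL _ hg (hconn a b)
    simp only [Pi.sub_apply] at hcst
    linarith
  have hhit : ∀ a b, hittingTime p a b
      = (Lp *ᵥ (L *ᵥ f b)) a - (Lp *ᵥ (L *ᵥ f b)) b := by
    intro a b
    rw [hht a b, show f b a = f b a - f b b by rw [hself b, sub_zero]]
    exact hfix b a b
  -- linear expansion of the right-hand sides
  have hb : ∀ j', (fun k => d k - VG * (if k = j' then 1 else 0))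
      = d - VG • (Pi.single j' 1 : Fin n → ℝ) := by
    intro j'
    funext k
    simp [Pi.single_apply]
  have hLpb : ∀ (j' k : Fin n), (Lp *ᵥ (L *ᵥ f j')) k
      = (Lp *ᵥ d) k - VG * (Lp *ᵥ (Pi.single j' 1 : Fin n → ℝ)) k := by
    intro j' k
    rw [hLf j', hb j', Matrix.mulVec_sub, Matrix.mulVec_smul]
    simp
  have hRHS : (Pi.single i 1 - Pi.single j 1) ⬝ᵥ
      (Lp *ᵥ (Pi.single i 1 - Pi.single j 1))
      = ((Lp *ᵥ (Pi.single i 1 : Fin n → ℝ)) i - (Lp *ᵥ (Pi.single j 1 : Fin n → ℝ)) i)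
        - ((Lp *ᵥ (Pi.single i 1 : Fin n → ℝ)) j - (Lp *ᵥ (Pi.single j 1 : Fin n → ℝ)) j) := by
    rw [Matrix.mulVec_sub, sub_dotProduct, single_dotProduct,
      single_dotProduct]
    simp [Pi.sub_apply]
  rw [hc i j, hhit i j, hhit j i, hRHS, hLpb j i, hLpb j j, hLpb i j, hLpb i i]
  ring
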